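/- arXiv:1806.02647 — 2 statements merged into one kernel-verified Lean document; each statement's English description precedes it below -/
import Mathlib

section
/- Let 0 < ε_1 < … < ε_m be tolerances, let c be the cost values of the dynamic program, and let S_m, …, S_1 be an algorithm output. Then S_1, …, S_m is a progressive simplification for ε_1 < … < ε_m, and it has minimal cumulative size: for every progressive simplification S'_1, …, S'_m for these tolerances, Σ_{k=1}^m |S_k| ≤ Σ_{k=1}^m |S'_k|. -/
open Metric

noncomputable section

/-- The Euclidean plane. -/
abbrev Pt : Type := EuclideanSpace ℝ (Fin 2)

/-- The subcurve `⟨p i, …, p j⟩`: the union of the segments between consecutive vertices. -/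
def subcurve {n : ℕ} (p : Fin n → Pt) (i j : Fin n) : Set Pt :=
  ⋃ (t : Fin n) (_ : i ≤ t ∧ t < j) (h : (t : ℕ) + 1 < n),
    segment ℝ (p t) (p ⟨(t : ℕ) + 1, h⟩)

/-- The (Hausdorff-distance) error of the shortcut `(i, j)`. -/
def err {n : ℕ} (p : Fin n → Pt) (i j : Fin n) : ℝ :=
  Metric.hausdorffDist (segment ℝ (p i) (p j)) (subcurve p i j)

/-- The edges (consecutive pairs) of a path given as a list of vertices. -/
def edges {n : ℕ} (l : List (Fin n)) : List (Fin n × Fin n) := l.zip l.tail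

/-- `l` is a path from `i` to `j` at tolerance `ε`: a strictly increasing sequence of
indices starting at `i`, ending at `j`, all of whose edges are valid shortcuts for `ε`. -/
def IsPath {n : ℕ} (p : Fin n → Pt) (ε : ℝ) (i j : Fin n) (l : List (Fin n)) : Prop :=
  l.Chain' (· < ·) ∧ l.head? = some i ∧ l.getLast? = some j ∧
    ∀ e ∈ edges l, err p e.1 e.2 ≤ ε

/-- The cost of a path: the sum of the costs of its edges. -/
def pathCost {n : ℕ} {α : Type*} [AddCommMonoid α] (c : Fin n → Fin n → α)
    (l : List (Fin n)) : α :=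
  ((edges l).map (fun e => c e.1 e.2)).sum

/-- Minimum cost (natural-valued) of a path from `i` to `j` at tolerance `ε`. -/
def minCost {n : ℕ} (p : Fin n → Pt) (ε : ℝ) (c : Fin n → Fin n → ℕ) (i j : Fin n) : ℕ :=
  sInf {s : ℕ | ∃ l, IsPath p ε i j l ∧ pathCost c l = s}

/-- Minimum cost (real-valued) of a path from `i` to `j` at tolerance `ε`. -/
def minCostR {n : ℕ} (p : Fin n → Pt) (ε : ℝ) (c : Fin n → Fin n → ℝ) (i j : Fin n) : ℝ :=
  sInf {s : ℝ | ∃ l, IsPath p ε i j l ∧ pathCost c l = s}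

/-- `l` is a minimum-cost path from `i` to `j` at tolerance `ε` w.r.t. cost `c`. -/
def IsMinPath {n : ℕ} (p : Fin n → Pt) (ε : ℝ) (c : Fin n → Fin n → ℕ) (i j : Fin n)
    (l : List (Fin n)) : Prop :=
  IsPath p ε i j l ∧ ∀ l', IsPath p ε i j l' → pathCost c l ≤ pathCost c l'

/-- `L'` is obtained from `L` by replacing each edge `(i, j)` of `L` by a minimum-cost
path from `i` to `j` at tolerance `ε`, and concatenating. -/
def Refines {n : ℕ} (p : Fin n → Pt) (ε : ℝ) (c : Fin n → Fin n → ℕ)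
    (L L' : List (Fin n)) : Prop :=
  ∃ f : Fin n × Fin n → List (Fin n),
    (∀ e ∈ edges L, IsMinPath p ε c e.1 e.2 (f e)) ∧
    L' = L.take 1 ++ ((edges L).map (fun e => (f e).tail)).flatten

/-- `S 1, …, S m` is a progressive simplification for the tolerances `ε 1 < … < ε m`:
each `S k` is an `ε k`-simplification (a path from `v0` to `v1`), and every vertex of
`S (k+1)` is a vertex of `S k`. -/
def ProgSimp {n : ℕ} (p : Fin n → Pt) (m : ℕ) (ε : ℕ → ℝ) (v0 v1 : Fin n)
    (S : ℕ → List (Fin n)) : Prop :=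
  (∀ k, 1 ≤ k → k ≤ m → IsPath p (ε k) v0 v1 (S k)) ∧
  (∀ k, 1 ≤ k → k < m → ∀ v ∈ S (k + 1), v ∈ S k)

section PSaux

variable {n : ℕ} {p : Fin n → Pt} {ε : ℝ}

lemma edges_nil : edges ([] : List (Fin n)) = [] := rfl
lemma edges_singleton (a : Fin n) : edges [a] = [] := rfl
lemma edges_cons₂ (a b : Fin n) (t : List (Fin n)) :
    edges (a :: b :: t) = (a, b) :: edges (b :: t) := rfl

lemma isPath_singleton (i : Fin n) : IsPath p ε i i [i] := by
  refine ⟨List.IsChain.singleton i, by simp, by simp, ?_⟩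
  simp [edges]

lemma isPath_singleton_iff {i j a : Fin n} :
    IsPath p ε i j [a] ↔ a = i ∧ i = j := by
  constructor
  · rintro ⟨-, h1, h2, -⟩
    simp at h1 h2; omega
  · rintro ⟨rfl, rfl⟩; exact isPath_singleton _

lemma isPath_cons_iff {i j a b : Fin n} {t : List (Fin n)} :
    IsPath p ε i j (a :: b :: t) ↔
      a = i ∧ a < b ∧ err p a b ≤ ε ∧ IsPath p ε b j (b :: t) := by
  constructor
  · rintro ⟨hc, hh, hl, he⟩
    replace hc := List.isChain_cons_cons.1 hc
    simp only [List.head?_cons, Option.some.injEq] at hh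
    rw [List.getLast?_cons_cons] at hl
    refine ⟨hh, hc.1, he (a, b) (by rw [edges_cons₂]; exact List.mem_cons_self), hc.2, rfl, hl, ?_⟩
    intro e hee
    exact he e (by rw [edges_cons₂]; exact List.mem_cons_of_mem _ hee)
  · rintro ⟨rfl, hab, hab2, hc, -, hl, he⟩
    refine ⟨List.isChain_cons_cons.2 ⟨hab, hc⟩, rfl, by rw [List.getLast?_cons_cons]; exact hl, ?_⟩
    rw [edges_cons₂]
    rintro e he'
    rcases List.mem_cons.1 he' with rfl | h
    exacts [hab2, he e h]

lemma IsPath.shape {i j : Fin n} {l : List (Fin n)} (h : IsPath p ε i j l) :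
    l = [i] ∨ ∃ b t, l = i :: b :: t := by
  obtain ⟨-, h1, -, -⟩ := h
  match l with
  | [] => simp at h1
  | [a] => simp at h1; subst h1; exact Or.inl rfl
  | a :: b :: t => simp at h1; subst h1; exact Or.inr ⟨b, t, rfl⟩

lemma IsPath.mem_bounds {i j : Fin n} {l : List (Fin n)} (h : IsPath p ε i j l) :
    ∀ v ∈ l, i ≤ v ∧ v ≤ j := by
  induction l generalizing i with
  | nil => simp [IsPath] at h
  | cons a t ih =>
    rcases h.shape with h1 | ⟨b, t', h1⟩
    · cases h1
      rw [isPath_singleton_iff] at h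
      rintro v hv
      simp only [List.mem_singleton] at hv
      subst hv
      exact ⟨le_refl _, le_of_eq h.2⟩
    · injection h1 with h1a h1t; subst h1a; subst h1t
      rw [isPath_cons_iff] at h
      obtain ⟨-, hab, -, hrest⟩ := h
      intro v hv
      rcases List.mem_cons.1 hv with rfl | hv
      · exact ⟨le_refl _, le_trans hab.le ((ih hrest) b (by simp)).2⟩
      · have := ih hrest v hv
        exact ⟨le_trans hab.le this.1, this.2⟩

lemma IsPath.ne_nil {i j : Fin n} {l : List (Fin n)} (h : IsPath p ε i j l) : l ≠ [] := by
  rcases h.shape with rfl | ⟨b, t, rfl⟩ <;> simp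

lemma IsPath.start_mem {i j : Fin n} {l : List (Fin n)} (h : IsPath p ε i j l) : i ∈ l := by
  rcases h.shape with rfl | ⟨b, t, rfl⟩ <;> simp

lemma IsPath.le {i j : Fin n} {l : List (Fin n)} (h : IsPath p ε i j l) : i ≤ j :=
  (h.mem_bounds i h.start_mem).2

lemma IsPath.eq_singleton {i : Fin n} {l : List (Fin n)} (h : IsPath p ε i i l) :
    l = [i] := by
  rcases h.shape with rfl | ⟨b, t, rfl⟩
  · rfl
  · rw [isPath_cons_iff] at h
    obtain ⟨-, hab, -, hrest⟩ := h
    exact absurd (lt_of_lt_of_le hab hrest.le) (lt_irrefl i)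


lemma edges_append : ∀ (A : List (Fin n)) (B : List (Fin n)) (x : Fin n),
    A.getLast? = some x → B.head? = some x → edges (A ++ B.tail) = edges A ++ edges B
  | [], _, _, h, _ => by simp at h
  | [a], B, x, hA, hB => by
    simp only [List.getLast?_singleton, Option.some.injEq] at hA
    subst hA
    match B, hB with
    | b :: tB, hB => simp only [List.head?_cons, Option.some.injEq] at hB; subst hB
                     simp [edges]
  | a :: a' :: t, B, x, hA, hB => by
    rw [List.getLast?_cons_cons] at hA
    have ih := edges_append (a' :: t) B x hA hB
    simp only [List.cons_append, edges_cons₂]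
    rw [← List.cons_append, ih]

lemma IsPath.append {i x j : Fin n} {A B : List (Fin n)}
    (hA : IsPath p ε i x A) (hB : IsPath p ε x j B) :
    IsPath p ε i j (A ++ B.tail) := by
  obtain ⟨hAc, hAh, hAl, hAe⟩ := hA
  obtain ⟨hBc, hBh, hBl, hBe⟩ := hB
  have hAne : A ≠ [] := by rintro rfl; simp at hAh
  have hBshape : B = x :: B.tail := by
    match B, hBh with
    | b :: tB, hBh => simp only [List.head?_cons, Option.some.injEq] at hBh; subst hBh; rfl
  refine ⟨?_, ?_, ?_, ?_⟩
  · refine hAc.append (by rw [hBshape] at hBc; exact hBc.tail) ?_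
    intro u hu v hv
    rw [hAl, Option.mem_some_iff] at hu
    subst hu
    rw [hBshape] at hBc; replace hBc := List.isChain_cons.1 hBc
    exact hBc.1 v hv
  · rw [List.head?_append_of_ne_nil _ hAne]
    exact hAh
  · rcases Classical.em (B.tail = []) with hBt | hBt
    · rw [hBt, List.append_nil, hAl]
      rw [hBshape, hBt] at hBl
      simpa using hBl
    · rw [List.getLast?_append]
      have h2 : B.tail.getLast? = some j := by
        match hBt2 : B.tail, hBt with
        | y :: tB, _ =>
          rw [hBshape, hBt2, List.getLast?_cons_cons] at hBl
          exact hBl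
      rw [h2]; rfl
  · intro e he
    rw [edges_append A B x hAl hBh] at he
    rcases List.mem_append.1 he with h | h
    exacts [hAe e h, hBe e h]

/-- The concatenation of the paths `f e` over the edges `e` of `L`. -/
def concatF (L : List (Fin n)) (f : Fin n × Fin n → List (Fin n)) : List (Fin n) :=
  L.take 1 ++ ((edges L).map (fun e => (f e).tail)).flatten

lemma concatF_singleton (a : Fin n) (f : Fin n × Fin n → List (Fin n)) :
    concatF [a] f = [a] := by
  simp [concatF, edges]

lemma concatF_cons {a b : Fin n} {t : List (Fin n)} {f : Fin n × Fin n → List (Fin n)}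
    (hf : (f (a, b)).head? = some a) :
    concatF (a :: b :: t) f = f (a, b) ++ (concatF (b :: t) f).tail := by
  have hsh : f (a, b) = a :: (f (a, b)).tail := by
    match hfa : f (a, b), hf with
    | y :: ty, hf => simp only [List.head?_cons, Option.some.injEq] at hf; subst hf; rfl
  unfold concatF
  rw [edges_cons₂]
  simp only [List.map_cons, List.flatten_cons, List.take_cons]
  conv_rhs => rw [hsh]
  simp

lemma concatF_congr {L : List (Fin n)} {f g : Fin n × Fin n → List (Fin n)}
    (h : ∀ e ∈ edges L, f e = g e) : concatF L f = concatF L g := by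
  unfold concatF
  congr 1
  congr 1
  exact List.map_congr_left fun e he => by rw [h e he]

lemma concat_main {f : Fin n × Fin n → List (Fin n)} :
    ∀ {L : List (Fin n)} {i j : Fin n}, L.Chain' (· < ·) → L.head? = some i →
    L.getLast? = some j → (∀ e ∈ edges L, IsPath p ε e.1 e.2 (f e)) →
    IsPath p ε i j (concatF L f) ∧
      edges (concatF L f) = ((edges L).map (fun e => edges (f e))).flatten ∧
      ∀ v ∈ L, v ∈ concatF L f
  | [], i, j, _, hh, _, _ => by simp at hh
  | [a], i, j, _, hh, hl, _ => by
    simp only [List.head?_cons, Option.some.injEq] at hh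
    simp only [List.getLast?_singleton, Option.some.injEq] at hl
    subst hh; subst hl
    rw [concatF_singleton]
    exact ⟨isPath_singleton a, by simp [edges], by simp⟩
  | a :: b :: t, i, j, hc, hh, hl, hf => by
    simp only [List.head?_cons, Option.some.injEq] at hh
    subst hh
    rw [List.getLast?_cons_cons] at hl
    replace hc := List.isChain_cons_cons.1 hc
    have hfe : IsPath p ε a b (f (a, b)) := hf (a, b) (by rw [edges_cons₂]; simp)
    have ih := concat_main (L := b :: t) (i := b) (j := j) hc.2 rfl hl
      (fun e he => hf e (by rw [edges_cons₂]; exact List.mem_cons_of_mem _ he))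
    have hcc := concatF_cons (f := f) (t := t) hfe.2.1
    have hQ : IsPath p ε b j (concatF (b :: t) f) := ih.1
    refine ⟨?_, ?_, ?_⟩
    · rw [hcc]; exact hfe.append hQ
    · rw [hcc, edges_append _ _ b hfe.2.2.1 hQ.2.1, ih.2.1, edges_cons₂]
      simp
    · intro v hv
      rw [hcc]
      rcases List.mem_cons.1 hv with rfl | hv
      · exact List.mem_append.2 (Or.inl hfe.start_mem)
      · have hvQ : v ∈ concatF (b :: t) f := ih.2.2 v hv
        have hQsh : concatF (b :: t) f = b :: (concatF (b :: t) f).tail := by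
          match hq : concatF (b :: t) f, hQ.2.1 with
          | y :: ty, hq2 => simp only [List.head?_cons, Option.some.injEq] at hq2; subst hq2; rfl
        rcases List.mem_cons.1 (by rw [← hQsh]; exact hvQ : v ∈ b :: (concatF (b :: t) f).tail) with rfl | hvt
        · refine List.mem_append.2 (Or.inl ?_)
          have := hfe.2.2.1
          exact List.mem_of_mem_getLast? (by rw [this]; rfl)
        · exact List.mem_append.2 (Or.inr hvt)

lemma edges_fst_bound : ∀ {b : Fin n} {t : List (Fin n)}, (b :: t).Chain' (· < ·) →
    ∀ e ∈ edges (b :: t), b ≤ e.1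
  | b, [], _, e, he => by simp [edges] at he
  | b, b' :: t, hc, e, he => by
    replace hc := List.isChain_cons_cons.1 hc
    rw [edges_cons₂] at he
    rcases List.mem_cons.1 he with rfl | he
    · exact le_refl _
    · exact le_trans hc.1.le (edges_fst_bound hc.2 e he)

lemma IsPath.split_at {v : Fin n} :
    ∀ {M : List (Fin n)} {i j : Fin n}, IsPath p ε i j M → v ∈ M →
    ∃ A B, M = A ++ B.tail ∧ IsPath p ε i v A ∧ IsPath p ε v j B
  | [], i, j, h, hv => by simp at hv
  | [a], i, j, h, hv => by
    rw [isPath_singleton_iff] at h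
    obtain ⟨rfl, rfl⟩ := h
    simp only [List.mem_singleton] at hv
    subst hv
    exact ⟨[v], [v], by simp, isPath_singleton v, isPath_singleton v⟩
  | a :: x :: t, i, j, h, hv => by
    rw [isPath_cons_iff] at h
    obtain ⟨rfl, hab, herr, hrest⟩ := h
    rcases List.mem_cons.1 hv with rfl | hv
    · exact ⟨[v], v :: x :: t, rfl, isPath_singleton v,
        isPath_cons_iff.2 ⟨rfl, hab, herr, hrest⟩⟩
    · obtain ⟨A', B', hMB, hA', hB'⟩ := IsPath.split_at hrest hv
      have hA'sh : A' = x :: A'.tail := by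
        match hq : A', hA'.2.1 with
        | y :: ty, hq2 => simp only [List.head?_cons, Option.some.injEq] at hq2; subst hq2; rfl
      refine ⟨a :: A', B', ?_, ?_, hB'⟩
      · rw [List.cons_append, ← hMB]
      · rw [hA'sh]
        exact isPath_cons_iff.2 ⟨rfl, hab, herr, by rw [← hA'sh]; exact hA'⟩

lemma splitting :
    ∀ {L M : List (Fin n)} {i j : Fin n}, L.Chain' (· < ·) → L.head? = some i →
    L.getLast? = some j → IsPath p ε i j M → (∀ v ∈ L, v ∈ M) →
    ∃ f, (∀ e ∈ edges L, IsPath p ε e.1 e.2 (f e)) ∧ M = concatF L f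
  | [], M, i, j, _, hh, _, _, _ => by simp at hh
  | [a], M, i, j, _, hh, hl, hM, _ => by
    simp only [List.head?_cons, Option.some.injEq] at hh
    simp only [List.getLast?_singleton, Option.some.injEq] at hl
    subst hh; subst hl
    refine ⟨fun _ => [], ?_, ?_⟩
    · simp [edges]
    · rw [concatF_singleton]
      exact hM.eq_singleton
  | a :: b :: t, M, i, j, hc, hh, hl, hM, hmem => by
    simp only [List.head?_cons, Option.some.injEq] at hh
    subst hh
    rw [List.getLast?_cons_cons] at hl
    replace hc := List.isChain_cons_cons.1 hc
    obtain ⟨A, B, hMAB, hA, hB⟩ := hM.split_at (hmem b (by simp))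
    have hBsh : B = b :: B.tail := by
      match hq : B, hB.2.1 with
      | y :: ty, hq2 => simp only [List.head?_cons, Option.some.injEq] at hq2; subst hq2; rfl
    have hmem' : ∀ v ∈ b :: t, v ∈ B := by
      intro v hv
      have hvM : v ∈ M := hmem v (List.mem_cons_of_mem _ hv)
      have hbv : b ≤ v := by
        rcases List.mem_cons.1 hv with rfl | hv'
        · exact le_refl _
        · exact ((List.pairwise_cons.1 (List.isChain_iff_pairwise.1 hc.2)).1 v hv').le
      rw [hMAB] at hvM
      rcases List.mem_append.1 hvM with hvA | hvB
      · have hvb : v ≤ b := (hA.mem_bounds v hvA).2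
        have : v = b := le_antisymm hvb hbv
        subst this
        exact hB.start_mem
      · rw [hBsh]
        exact List.mem_cons_of_mem _ hvB
    obtain ⟨f', hf', hBcf⟩ := splitting (L := b :: t) hc.2 rfl hl hB hmem'
    classical
    have hne : ∀ e ∈ edges (b :: t), e ≠ (a, b) := by
      intro e he hcon
      have := edges_fst_bound hc.2 e he
      rw [hcon] at this
      exact absurd (lt_of_le_of_lt this hc.1) (lt_irrefl b)
    refine ⟨fun e => if e = (a, b) then A else f' e, ?_, ?_⟩
    · intro e he
      rw [edges_cons₂] at he
      rcases List.mem_cons.1 he with rfl | he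
      · simpa using hA
      · simp only [if_neg (hne e he)]
        exact hf' e he
    · have hAh : A.head? = some a := hA.2.1
      rw [concatF_cons (by simpa using hAh)]
      rw [← concatF_congr (f := f') (g := fun e => if e = (a, b) then A else f' e)
        (fun e he => by simp [if_neg (hne e he)]), ← hBcf, hMAB]
      simp

lemma edges_lt : ∀ {l : List (Fin n)}, l.Chain' (· < ·) → ∀ e ∈ edges l, e.1 < e.2
  | [], _, e, he => by simp [edges] at he
  | [a], _, e, he => by simp [edges] at he
  | a :: b :: t, hc, e, he => by
    replace hc := List.isChain_cons_cons.1 hc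
    rw [edges_cons₂] at he
    rcases List.mem_cons.1 he with rfl | he
    · exact hc.1
    · exact edges_lt hc.2 e he

lemma edges_length (l : List (Fin n)) : (edges l).length = l.length - 1 := by
  simp only [edges, List.length_zip, List.length_tail]
  omega

lemma length_eq_edges_length_add_one {l : List (Fin n)} (h : l ≠ []) :
    l.length = (edges l).length + 1 := by
  rw [edges_length]
  have := List.length_pos_iff.2 h
  omega

lemma sum_map_one_add {α : Type*} (g : α → ℕ) : ∀ (l : List α),
    (l.map (fun e => 1 + g e)).sum = l.length + (l.map g).sum
  | [] => by simp
  | a :: t => by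
    simp only [List.map_cons, List.sum_cons, List.length_cons, sum_map_one_add g t]
    omega

lemma pathCost_concatF {c : Fin n → Fin n → ℕ} {L : List (Fin n)}
    {f : Fin n × Fin n → List (Fin n)}
    (h : edges (concatF L f) = ((edges L).map (fun e => edges (f e))).flatten) :
    pathCost c (concatF L f) = ((edges L).map (fun e => pathCost c (f e))).sum := by
  unfold pathCost
  rw [h, List.map_flatten, List.sum_flatten, List.map_map, List.map_map]
  rfl

lemma pathCost_one {c : Fin n → Fin n → ℕ} {εv : ℝ} {i j : Fin n} {l : List (Fin n)}
    (hl : IsPath p εv i j l) (hc : ∀ i j : Fin n, i < j → err p i j ≤ εv → c i j = 1) :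
    pathCost c l = (edges l).length := by
  unfold pathCost
  rw [List.map_congr_left (fun e he => hc e.1 e.2 (edges_lt hl.1 e he) (hl.2.2.2 e he))]
  simp [List.sum_replicate, List.map_const]

lemma minPath_sInf {c : Fin n → Fin n → ℕ} {εv : ℝ} {i j : Fin n} {l : List (Fin n)}
    (h : IsMinPath p εv c i j l) : minCost p εv c i j = pathCost c l := by
  refine le_antisymm (Nat.sInf_le ⟨l, h.1, rfl⟩) (le_csInf ⟨_, l, h.1, rfl⟩ ?_)
  rintro b ⟨l', hl', rfl⟩
  exact h.2 l' hl'

/-- An algorithm output `S m, …, S 1` is a progressive simplification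
for `ε 1 < … < ε m`, and it has minimal cumulative size among all progressive
simplifications. -/
theorem algorithm_output_minimal {n m : ℕ} (hn : 2 ≤ n) (hm : 1 ≤ m) (p : Fin n → Pt)
    (ε : ℕ → ℝ) (hε1 : 0 < ε 1)
    (hεmono : ∀ k, 1 ≤ k → k < m → ε k < ε (k + 1))
    (c : ℕ → Fin n → Fin n → ℕ)
    (hc1 : ∀ i j : Fin n, i < j → err p i j ≤ ε 1 → c 1 i j = 1)
    (hck : ∀ k, 2 ≤ k → k ≤ m → ∀ i j : Fin n, i < j → err p i j ≤ ε k →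
      c k i j = 1 + minCost p (ε (k - 1)) (c (k - 1)) i j)
    (S : ℕ → List (Fin n))
    (hSm : IsMinPath p (ε m) (c m) (⟨0, by omega⟩ : Fin n) (⟨n - 1, by omega⟩ : Fin n) (S m))
    (hSk : ∀ k, 1 ≤ k → k < m → Refines p (ε k) (c k) (S (k + 1)) (S k)) :
    ProgSimp p m ε (⟨0, by omega⟩ : Fin n) (⟨n - 1, by omega⟩ : Fin n) S ∧
    ∀ S' : ℕ → List (Fin n),
      ProgSimp p m ε (⟨0, by omega⟩ : Fin n) (⟨n - 1, by omega⟩ : Fin n) S' →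
      ∑ k ∈ Finset.Icc 1 m, (S k).length ≤ ∑ k ∈ Finset.Icc 1 m, (S' k).length := by
  classical
  have hpathAux : ∀ d k, k = m - d → 1 ≤ k →
      IsPath p (ε k) (⟨0, by omega⟩ : Fin n) (⟨n - 1, by omega⟩ : Fin n) (S k) := by
    intro d
    induction d with
    | zero =>
      intro k hk _
      have : k = m := by omega
      rw [this]
      exact hSm.1
    | succ d ih =>
      intro k hk hk1
      by_cases hkm : k = m
      · rw [hkm]; exact hSm.1
      · have hklt : k < m := by omega
        have hnext := ih (k + 1) (by omega) (by omega)
        obtain ⟨f, hf, hSkEq⟩ := hSk k hk1 hklt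
        have hconc := concat_main (f := f) hnext.1 hnext.2.1 hnext.2.2.1
          (fun e he => (hf e he).1)
        rw [(hSkEq : S k = concatF (S (k + 1)) f)]
        exact hconc.1
  have hpath' : ∀ k, 1 ≤ k → k ≤ m →
      IsPath p (ε k) (⟨0, by omega⟩ : Fin n) (⟨n - 1, by omega⟩ : Fin n) (S k) :=
    fun k h1 h2 => hpathAux (m - k) k (by omega) h1
  have hmemS : ∀ k, 1 ≤ k → k < m → ∀ v ∈ S (k + 1), v ∈ S k := by
    intro k h1 h2 v hv
    obtain ⟨f, hf, hSkEq⟩ := hSk k h1 h2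
    have hnext := hpath' (k + 1) (by omega) (by omega)
    have hconc := concat_main (f := f) hnext.1 hnext.2.1 hnext.2.2.1
      (fun e he => (hf e he).1)
    rw [(hSkEq : S k = concatF (S (k + 1)) f)]
    exact hconc.2.2 v hv
  have LB : ∀ (T : ℕ → List (Fin n)),
      ProgSimp p m ε (⟨0, by omega⟩ : Fin n) (⟨n - 1, by omega⟩ : Fin n) T →
      ∀ k, 1 ≤ k → k ≤ m →
      pathCost (c k) (T k) ≤ ∑ t ∈ Finset.Icc 1 k, (edges (T t)).length := by
    intro T hT k hk
    induction k, hk using Nat.le_induction with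
    | base =>
      intro hm1
      rw [pathCost_one (hT.1 1 le_rfl hm1) hc1]
      simp
    | succ k hk ih =>
      intro hk1m
      have hkm : k ≤ m := by omega
      have hTk1 := hT.1 (k + 1) (by omega) hk1m
      have hTk := hT.1 k hk hkm
      obtain ⟨f, hf, hTeq⟩ := splitting hTk1.1 hTk1.2.1 hTk1.2.2.1 hTk
        (hT.2 k hk (by omega))
      have hconc := concat_main (f := f) hTk1.1 hTk1.2.1 hTk1.2.2.1 hf
      have hc' : ∀ e ∈ edges (T (k + 1)),
          c (k + 1) e.1 e.2 = 1 + minCost p (ε k) (c k) e.1 e.2 := by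
        intro e he
        have h1 := hck (k + 1) (by omega) hk1m e.1 e.2 (edges_lt hTk1.1 e he)
          (hTk1.2.2.2 e he)
        simpa using h1
      have hcost : pathCost (c (k + 1)) (T (k + 1)) =
          (edges (T (k + 1))).length +
            ((edges (T (k + 1))).map
              (fun e => minCost p (ε k) (c k) e.1 e.2)).sum := by
        unfold pathCost
        rw [List.map_congr_left hc']
        exact sum_map_one_add _ _
      have hsum : ((edges (T (k + 1))).map
            (fun e => minCost p (ε k) (c k) e.1 e.2)).sum ≤
          ((edges (T (k + 1))).map (fun e => pathCost (c k) (f e))).sum :=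
        List.sum_le_sum (fun e he => Nat.sInf_le ⟨f e, hf e he, rfl⟩)
      have hTkcost : ((edges (T (k + 1))).map
            (fun e => pathCost (c k) (f e))).sum = pathCost (c k) (T k) := by
        rw [(hTeq : T k = concatF (T (k + 1)) f)]
        exact (pathCost_concatF hconc.2.1).symm
      have hih := ih hkm
      rw [Finset.sum_Icc_succ_top (by omega)]
      omega
  have UB : ∀ k, 1 ≤ k → k ≤ m →
      pathCost (c k) (S k) = ∑ t ∈ Finset.Icc 1 k, (edges (S t)).length := by
    intro k hk
    induction k, hk using Nat.le_induction with
    | base =>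
      intro _
      rw [pathCost_one (hpath' 1 le_rfl hm) hc1]
      simp
    | succ k hk ih =>
      intro hk1m
      obtain ⟨f, hf, hSeq⟩ := hSk k hk (by omega)
      have hSk1 := hpath' (k + 1) (by omega) hk1m
      have hconc := concat_main (f := f) hSk1.1 hSk1.2.1 hSk1.2.2.1
        (fun e he => (hf e he).1)
      have hc' : ∀ e ∈ edges (S (k + 1)),
          c (k + 1) e.1 e.2 = 1 + pathCost (c k) (f e) := by
        intro e he
        have h1 := hck (k + 1) (by omega) hk1m e.1 e.2 (edges_lt hSk1.1 e he)
          (hSk1.2.2.2 e he)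
        have h2 := minPath_sInf (hf e he)
        simp only [Nat.add_sub_cancel] at h1
        rw [h1, h2]
      have hcost : pathCost (c (k + 1)) (S (k + 1)) =
          (edges (S (k + 1))).length +
            ((edges (S (k + 1))).map (fun e => pathCost (c k) (f e))).sum := by
        unfold pathCost
        rw [List.map_congr_left hc']
        exact sum_map_one_add _ _
      have hSkcost : pathCost (c k) (S k) =
          ((edges (S (k + 1))).map (fun e => pathCost (c k) (f e))).sum := by
        rw [(hSeq : S k = concatF (S (k + 1)) f)]
        exact pathCost_concatF hconc.2.1
      have hih := ih (by omega)
      rw [Finset.sum_Icc_succ_top (by omega)]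
      omega
  refine ⟨⟨hpath', hmemS⟩, ?_⟩
  intro S' hS'
  have h1 : pathCost (c m) (S m) ≤ pathCost (c m) (S' m) :=
    hSm.2 _ (hS'.1 m hm le_rfl)
  have h2 := LB S' hS' m hm le_rfl
  have h3 := UB m hm le_rfl
  have hlen : ∀ (T : ℕ → List (Fin n)),
      (∀ k, 1 ≤ k → k ≤ m →
        IsPath p (ε k) (⟨0, by omega⟩ : Fin n) (⟨n - 1, by omega⟩ : Fin n) (T k)) →
      ∑ k ∈ Finset.Icc 1 m, (T k).length =
        (∑ k ∈ Finset.Icc 1 m, (edges (T k)).length) + m := by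
    intro T hT
    have hcongr : ∀ k ∈ Finset.Icc 1 m, (T k).length = (edges (T k)).length + 1 :=
      fun k hk => length_eq_edges_length_add_one
        (hT k (Finset.mem_Icc.1 hk).1 (Finset.mem_Icc.1 hk).2).ne_nil
    rw [Finset.sum_congr rfl hcongr, Finset.sum_add_distrib]
    simp [Nat.card_Icc]
  rw [hlen S hpath', hlen S' hS'.1]
  omega
end PSaux
end
end

section
/- The infimum, over all continuous progressive simplifications S, of ∫_0^{ε_M} |S(ε)| dε is attained, and it equals the minimum, over all progressive simplifications S_1, …, S_r for the tolerance sequence e_1 < … < e_r, of Σ_{k=1}^r (e_{k+1} − e_k)·|S_k|. -/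
open Metric

noncomputable section

/-- A continuous progressive simplification on `[0, εM)`: `S ε` is an `ε`-simplification
for every `0 ≤ ε < εM`, and every vertex of `S ε'` is a vertex of `S ε` whenever
`ε ≤ ε'`. -/
def ContProgSimp {n : ℕ} (p : Fin n → Pt) (εM : ℝ) (v0 v1 : Fin n)
    (S : ℝ → List (Fin n)) : Prop :=
  (∀ x : ℝ, 0 ≤ x → x < εM → IsPath p x v0 v1 (S x)) ∧
  (∀ x x' : ℝ, 0 ≤ x → x ≤ x' → x' < εM → ∀ v ∈ S x', v ∈ S x)

-- auxiliary lemmas, part 1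
lemma chain'_edges {n : ℕ} {R : Fin n → Fin n → Prop} :
    ∀ {l : List (Fin n)}, l.Chain' R → ∀ e ∈ edges l, R e.1 e.2
  | [], _, e, he => by simp [edges] at he
  | [a], _, e, he => by simp [edges] at he
  | a :: b :: t, h, e, he => by
    rw [show List.Chain' R (a :: b :: t) ↔ _ from List.isChain_cons_cons] at h
    simp only [edges, List.tail_cons, List.zip_cons_cons, List.mem_cons] at he
    rcases he with rfl | he
    · exact h.1
    · exact chain'_edges h.2 e he

lemma isPath_nodup {n : ℕ} {p : Fin n → Pt} {ε : ℝ} {i j : Fin n} {l : List (Fin n)}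
    (h : IsPath p ε i j l) : l.Nodup :=
  (List.isChain_iff_pairwise.mp h.1).imp ne_of_lt

lemma isPath_mono {n : ℕ} {p : Fin n → Pt} {ε ε' : ℝ} {i j : Fin n} {l : List (Fin n)}
    (h : IsPath p ε i j l) (hε : ε ≤ ε') : IsPath p ε' i j l :=
  ⟨h.1, h.2.1, h.2.2.1, fun e he => (h.2.2.2 e he).trans hε⟩

lemma length_le_of_subset {n : ℕ} {l l' : List (Fin n)} (hl : l.Nodup) (hl' : l'.Nodup)
    (hsub : ∀ v ∈ l', v ∈ l) : l'.length ≤ l.length := by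
  rw [← List.toFinset_card_of_nodup hl, ← List.toFinset_card_of_nodup hl']
  exact Finset.card_le_card (fun v hv => List.mem_toFinset.mpr (hsub v (List.mem_toFinset.mp hv)))

lemma err_succ {n : ℕ} (p : Fin n → Pt) (t : Fin n) (h : (t : ℕ) + 1 < n) :
    err p t ⟨(t : ℕ) + 1, h⟩ = 0 := by
  have hsub : subcurve p t ⟨(t : ℕ) + 1, h⟩ = segment ℝ (p t) (p ⟨(t : ℕ) + 1, h⟩) := by
    ext x
    simp only [subcurve, Set.mem_iUnion]
    constructor
    · rintro ⟨t', ⟨h1, h2⟩, h3, hx⟩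
      have h2' : (t' : ℕ) < (t : ℕ) + 1 := by simpa [Fin.lt_def] using h2
      have h1' : (t : ℕ) ≤ (t' : ℕ) := h1
      have : t' = t := by
        apply Fin.ext; omega
      subst this
      exact hx
    · intro hx
      exact ⟨t, ⟨le_refl t, Fin.lt_def.mpr (Nat.lt_succ_self _)⟩, h, hx⟩
  rw [err, hsub, Metric.hausdorffDist_self_zero]
lemma finRange_chain {n : ℕ} :
    (List.finRange n).Chain' (fun a b : Fin n => ∃ h : (a : ℕ) + 1 < n, b = ⟨(a : ℕ) + 1, h⟩) := by
  rw [show List.Chain' _ (List.finRange n) ↔ _ from List.isChain_iff_getElem]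
  intro i hi
  simp only [List.length_finRange] at hi
  simp only [List.getElem_finRange]
  refine ⟨by simp; omega, by apply Fin.ext; simp⟩

lemma basePath {n : ℕ} (hn : 2 ≤ n) (p : Fin n → Pt) {ε : ℝ} (hε : 0 ≤ ε) :
    IsPath p ε (⟨0, Nat.zero_lt_of_lt hn⟩ : Fin n)
      (⟨n - 1, Nat.sub_one_lt (Nat.pos_iff_ne_zero.mp (Nat.zero_lt_of_lt hn))⟩ : Fin n) (List.finRange n) := by
  have hne : List.finRange n ≠ [] := by
    simp [← List.length_eq_zero_iff, List.length_finRange]; omega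
  refine ⟨?_, ?_, ?_, ?_⟩
  · exact finRange_chain.imp (fun a b ⟨h, hb⟩ => by subst hb; exact Fin.lt_def.mpr (Nat.lt_succ_self _))
  · rw [List.head?_eq_head hne, List.head_eq_getElem, List.getElem_finRange]
    rfl
  · rw [List.getLast?_eq_getLast_of_ne_nil hne, List.getLast_eq_getElem, List.getElem_finRange]
    congr 1
    apply Fin.ext
    simp
  · intro ed hed
    obtain ⟨h, hb⟩ := chain'_edges finRange_chain ed hed
    rw [hb, err_succ p ed.1 h]
    exact hε
open MeasureTheory in
lemma ae_off_singleton {P : ℝ → Prop} (c : ℝ) (h : ∀ x, x ≠ c → P x) :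
    ∀ᵐ x ∂(volume : Measure ℝ), P x := by
  rw [MeasureTheory.ae_iff]
  refine measure_mono_null (t := {c}) (fun x hx => ?_) Real.volume_singleton
  simp only [Set.mem_setOf_eq] at hx
  simp only [Set.mem_singleton_iff]
  by_contra hne
  exact hx (h x hne)

lemma piece_eq {a b c : ℝ} {g : ℝ → ℝ} (hab : a ≤ b) (h : ∀ x ∈ Set.Ico a b, g x = c) :
    ∫ x in a..b, g x = (b - a) * c := by
  rw [intervalIntegral.integral_congr_ae (g := fun _ => c) ?_, intervalIntegral.integral_const,
    smul_eq_mul]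
  refine ae_off_singleton b (fun x hx hmem => ?_)
  rw [Set.uIoc_of_le hab] at hmem
  exact h x ⟨hmem.1.le, lt_of_le_of_ne hmem.2 hx⟩

lemma piece_ge {a b c : ℝ} {g : ℝ → ℝ} (hab : a ≤ b)
    (hint : IntervalIntegrable g MeasureTheory.volume a b)
    (h : ∀ x ∈ Set.Ico a b, c ≤ g x) : (b - a) * c ≤ ∫ x in a..b, g x := by
  have H := intervalIntegral.integral_mono_ae_restrict (f := fun _ => c) (g := g)
    (μ := MeasureTheory.volume) hab intervalIntegrable_const hint ?_
  · simpa [intervalIntegral.integral_const, smul_eq_mul] using H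
  · rw [Filter.EventuallyLE, MeasureTheory.ae_restrict_iff' measurableSet_Icc]
    refine ae_off_singleton b (fun x hx hmem => ?_)
    exact h x ⟨hmem.1, lt_of_le_of_ne hmem.2 hx⟩

lemma contProg_antitoneOn {n : ℕ} {p : Fin n → Pt} {εM : ℝ} {v0 v1 : Fin n}
    {S : ℝ → List (Fin n)} (hS : ContProgSimp p εM v0 v1 S) :
    AntitoneOn (fun x => if x < εM then ((S x).length : ℝ) else 0) (Set.Icc 0 εM) := by
  intro x hx y hy hxy
  by_cases hyM : y < εM
  · have hxM : x < εM := lt_of_le_of_lt hxy hyM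
    simp only [if_pos hxM, if_pos hyM, Nat.cast_le]
    exact length_le_of_subset (isPath_nodup (hS.1 x hx.1 hxM)) (isPath_nodup (hS.1 y (hx.1.trans hxy) hyM))
      (hS.2 x y hx.1 hxy hyM)
  · simp only [if_neg hyM]
    split <;> positivity
/-- The infimum of `∫₀^{εM} |S(ε)| dε` over all continuous progressive
simplifications is attained, and equals the minimum of `Σ_{k=1}^r (e (k+1) - e k) * |S k|`
over all progressive simplifications for the tolerance sequence `e 1 < … < e r` of
distinct shortcut error values below `εM`. -/
theorem continuous_progressive_minimum {n : ℕ} (hn : 2 ≤ n) (p : Fin n → Pt)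
    (εM : ℝ)
    (hεM : εM = err p (⟨0, by omega⟩ : Fin n) (⟨n - 1, by omega⟩ : Fin n))
    (hεMpos : 0 < εM)
    (r : ℕ) (hr : 1 ≤ r) (e : ℕ → ℝ)
    (hemono : ∀ k, 1 ≤ k → k ≤ r → e k < e (k + 1))
    (hetop : e (r + 1) = εM)
    (heset : {x : ℝ | (∃ i j : Fin n, i < j ∧ err p i j = x) ∧ x < εM} =
      {x : ℝ | ∃ k, 1 ≤ k ∧ k ≤ r ∧ e k = x}) :
    ∃ T : ℝ → List (Fin n),
      ContProgSimp p εM (⟨0, by omega⟩ : Fin n) (⟨n - 1, by omega⟩ : Fin n) T ∧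
      (∀ S : ℝ → List (Fin n),
        ContProgSimp p εM (⟨0, by omega⟩ : Fin n) (⟨n - 1, by omega⟩ : Fin n) S →
        (∫ x in (0:ℝ)..εM, ((T x).length : ℝ)) ≤ ∫ x in (0:ℝ)..εM, ((S x).length : ℝ)) ∧
      (∫ x in (0:ℝ)..εM, ((T x).length : ℝ)) =
        sInf {s : ℝ | ∃ S : ℕ → List (Fin n),
          ProgSimp p r e (⟨0, by omega⟩ : Fin n) (⟨n - 1, by omega⟩ : Fin n) S ∧
          ∑ k ∈ Finset.Icc 1 r, (e (k + 1) - e k) * ((S k).length : ℝ) = s} := by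
  have hεM0 : (0:ℝ) ≤ εM := hεMpos.le
  set v0 : Fin n := ⟨0, by omega⟩ with hv0
  set v1 : Fin n := ⟨n - 1, by omega⟩ with hv1
  set D : Set ℝ := {s : ℝ | ∃ S : ℕ → List (Fin n),
      ProgSimp p r e v0 v1 S ∧
      ∑ k ∈ Finset.Icc 1 r, (e (k + 1) - e k) * ((S k).length : ℝ) = s} with hDdef
  -- basic facts about e
  have herr_nonneg : ∀ k, 1 ≤ k → k ≤ r → 0 ≤ e k := by
    intro k h1 h2
    have hm : e k ∈ {x : ℝ | (∃ i j : Fin n, i < j ∧ err p i j = x) ∧ x < εM} := by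
      rw [heset]; exact ⟨k, h1, h2, rfl⟩
    obtain ⟨⟨i, j, hij, herr⟩, _⟩ := hm
    rw [← herr]; exact Metric.hausdorffDist_nonneg
  have emono : ∀ j, 1 ≤ j → ∀ k, j ≤ k → k ≤ r + 1 → e j ≤ e k := by
    intro j hj k hk hkr
    induction k, hk using Nat.le_induction with
    | base => exact le_rfl
    | succ m hjm ih =>
      exact (ih (by omega)).trans (hemono m (hj.trans hjm) (by omega)).le
  have heub : ∀ k, 1 ≤ k → k ≤ r + 1 → e k ≤ εM := fun k h1 h2 =>
    hetop ▸ emono k h1 (r + 1) h2 le_rfl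
  have he1 : e 1 = 0 := by
    have h0mem : (0:ℝ) ∈ {x : ℝ | ∃ k, 1 ≤ k ∧ k ≤ r ∧ e k = x} := by
      rw [← heset]
      refine ⟨⟨⟨0, by omega⟩, ⟨1, by omega⟩, Fin.lt_def.mpr (by simp), ?_⟩, hεMpos⟩
      have h01 : ((⟨0, by omega⟩ : Fin n) : ℕ) + 1 < n := by simp; omega
      have := err_succ p (⟨0, by omega⟩ : Fin n) h01
      convert this using 2
    obtain ⟨k0, hk01, hk0r, hk0⟩ := h0mem
    have h1 := herr_nonneg 1 le_rfl hr
    have h2 : e 1 ≤ e k0 := emono 1 le_rfl k0 hk01 (by omega)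
    rw [hk0] at h2
    linarith
  -- the discrete minimum
  have hDne : D.Nonempty :=
    ⟨_, fun _ => List.finRange n,
      ⟨fun k h1 h2 => basePath hn p (herr_nonneg k h1 h2), fun _ _ _ v hv => hv⟩, rfl⟩
  have hDfin : D.Finite := by
    have hsub : D ⊆ (fun t : Fin (r+1) → Fin (n+1) =>
        ∑ k ∈ Finset.Icc 1 r, (e (k+1) - e k) *
          ((t ⟨k % (r+1), Nat.mod_lt _ (by omega)⟩ : ℕ) : ℝ)) '' Set.univ := by
      rintro s ⟨S, hS, rfl⟩
      refine ⟨fun k => ⟨min ((S k.val).length) n, by omega⟩, Set.mem_univ _, ?_⟩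
      refine Finset.sum_congr rfl (fun k hk => ?_)
      simp only [Finset.mem_Icc] at hk
      have hmod : k % (r+1) = k := Nat.mod_eq_of_lt (by omega)
      have hlen : (S k).length ≤ n := by
        simpa using (isPath_nodup (hS.1 k hk.1 hk.2)).length_le_card
      congr 2
      simp [hmod, Nat.min_eq_left hlen]
    exact (Set.finite_univ.image _).subset hsub
  obtain ⟨SD, hSD, hSDsum⟩ : sInf D ∈ D := hDne.csInf_mem hDfin
  -- transitive nesting
  have nest : ∀ (S : ℕ → List (Fin n)), ProgSimp p r e v0 v1 S →
      ∀ j k, 1 ≤ j → j ≤ k → k ≤ r → ∀ v ∈ S k, v ∈ S j := by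
    intro S hS j k h1 hjk
    induction k, hjk using Nat.le_induction with
    | base => exact fun _ v hv => hv
    | succ m hjm ih =>
      intro hmr v hv
      exact ih (by omega) v (hS.2 m (h1.trans hjm) (by omega) v hv)
  -- the step-index function K
  set K : ℝ → ℕ := fun x => sSup {k : ℕ | (1 ≤ k ∧ k ≤ r) ∧ e k ≤ x} with hK
  have hKbdd : ∀ x : ℝ, BddAbove {k : ℕ | (1 ≤ k ∧ k ≤ r) ∧ e k ≤ x} :=
    fun x => ⟨r, fun k hk => hk.1.2⟩
  have hKne : ∀ x : ℝ, 0 ≤ x → ({k : ℕ | (1 ≤ k ∧ k ≤ r) ∧ e k ≤ x}).Nonempty :=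
    fun x hx => ⟨1, ⟨le_rfl, hr⟩, by rw [he1]; exact hx⟩
  have hKmem : ∀ x : ℝ, 0 ≤ x → (1 ≤ K x ∧ K x ≤ r) ∧ e (K x) ≤ x :=
    fun x hx => Nat.sSup_mem (hKne x hx) (hKbdd x)
  have hKmono : ∀ x y : ℝ, 0 ≤ x → x ≤ y → K x ≤ K y := by
    intro x y hx hxy
    exact csSup_le_csSup (hKbdd y) (hKne x hx)
      (fun k hk => ⟨hk.1, hk.2.trans hxy⟩)
  have hKeq : ∀ k (x : ℝ), 1 ≤ k → k ≤ r → e k ≤ x → x < e (k+1) → K x = k := by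
    intro k x h1 h2 hex hxe
    refine le_antisymm (csSup_le ⟨k, ⟨h1, h2⟩, hex⟩ ?_) (le_csSup (hKbdd x) ⟨⟨h1, h2⟩, hex⟩)
    intro j hj
    by_contra hjk
    push_neg at hjk
    have hjr : j ≤ r := hj.1.2
    have : e (k+1) ≤ e j := emono (k+1) (by omega) j hjk (by omega)
    have := hj.2
    linarith
  -- the optimal continuous simplification
  set T : ℝ → List (Fin n) := fun x => SD (K x) with hT
  have hCPS : ContProgSimp p εM v0 v1 T := by
    constructor
    · intro x hx hxM
      exact isPath_mono (hSD.1 (K x) (hKmem x hx).1.1 (hKmem x hx).1.2) (hKmem x hx).2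
    · intro x x' hx hxx' hx'M v hv
      exact nest SD hSD (K x) (K x') (hKmem x hx).1.1
        (hKmono x x' hx hxx') (hKmem x' (hx.trans hxx')).1.2 v hv
  -- integral splitting machinery
  have hcongr : ∀ S : ℝ → List (Fin n), (∫ x in (0:ℝ)..εM, ((S x).length : ℝ)) =
      ∫ x in (0:ℝ)..εM, (if x < εM then ((S x).length : ℝ) else 0) := by
    intro S
    refine intervalIntegral.integral_congr_ae ?_
    refine ae_off_singleton εM (fun x hx hmem => ?_)
    rw [Set.uIoc_of_le hεM0] at hmem
    rw [if_pos (lt_of_le_of_ne hmem.2 hx)]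
  have hpieceInt : ∀ {S : ℝ → List (Fin n)}, ContProgSimp p εM v0 v1 S →
      ∀ k ∈ Finset.Ico 1 (r+1), IntervalIntegrable
        (fun x => if x < εM then ((S x).length : ℝ) else 0) MeasureTheory.volume (e k) (e (k+1)) := by
    intro S hS k hk
    simp only [Finset.mem_Ico] at hk
    have hle : e k ≤ e (k+1) := (hemono k hk.1 (by omega)).le
    refine ((contProg_antitoneOn hS).mono ?_).intervalIntegrable
    rw [Set.uIcc_of_le hle]
    exact Set.Icc_subset_Icc (herr_nonneg k hk.1 (by omega)) (heub (k+1) (by omega) (by omega))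
  have hsplit : ∀ g : ℝ → ℝ,
      (∀ k ∈ Finset.Ico 1 (r+1), IntervalIntegrable g MeasureTheory.volume (e k) (e (k+1))) →
      ∑ k ∈ Finset.Icc 1 r, (∫ x in (e k)..(e (k+1)), g x) = ∫ x in (0:ℝ)..εM, g x := by
    intro g hint
    rw [← Finset.Ico_add_one_right_eq_Icc]
    rw [intervalIntegral.sum_integral_adjacent_intervals_Ico (by omega)
      (fun k hk => hint k (Finset.mem_Ico.mpr hk))]
    rw [he1, hetop]
  -- value of the integral of T
  have hTval : (∫ x in (0:ℝ)..εM, ((T x).length : ℝ)) = sInf D := by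
    rw [hcongr T, ← hsplit _ (hpieceInt hCPS), ← hSDsum]
    refine Finset.sum_congr rfl (fun k hk => ?_)
    simp only [Finset.mem_Icc] at hk
    have hle : e k ≤ e (k+1) := (hemono k hk.1 hk.2).le
    refine piece_eq hle (fun x hx => ?_)
    have hxM : x < εM := lt_of_lt_of_le hx.2 (heub (k+1) (by omega) (by omega))
    rw [if_pos hxM]
    show ((SD (K x)).length : ℝ) = ((SD k).length : ℝ)
    rw [hKeq k x hk.1 hk.2 hx.1 hx.2]
  refine ⟨T, hCPS, ?_, hTval⟩
  -- minimality
  intro S hS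
  rw [hTval]
  -- choose minimizers on each interval
  have hex : ∀ k : ℕ, ∃ x : ℝ, 1 ≤ k → k ≤ r →
      x ∈ Set.Ico (e k) (e (k+1)) ∧
      ∀ y ∈ Set.Ico (e k) (e (k+1)), (S x).length ≤ (S y).length := by
    intro k
    by_cases hk : 1 ≤ k ∧ k ≤ r
    · have hne : {m : ℕ | ∃ x ∈ Set.Ico (e k) (e (k+1)), (S x).length = m}.Nonempty :=
        ⟨_, e k, ⟨le_rfl, hemono k hk.1 hk.2⟩, rfl⟩
      obtain ⟨x, hx, hxm⟩ := Nat.sInf_mem hne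
      exact ⟨x, fun _ _ => ⟨hx, fun y hy => hxm ▸ Nat.sInf_le ⟨y, hy, rfl⟩⟩⟩
    · exact ⟨0, fun h1 h2 => absurd ⟨h1, h2⟩ hk⟩
  choose xs hxs using hex
  have hxs0 : ∀ k, 1 ≤ k → k ≤ r → (0:ℝ) ≤ xs k :=
    fun k h1 h2 => (herr_nonneg k h1 h2).trans ((hxs k h1 h2).1.1)
  have hxsM : ∀ k, 1 ≤ k → k ≤ r → xs k < εM :=
    fun k h1 h2 => lt_of_lt_of_le (hxs k h1 h2).1.2 (heub (k+1) (by omega) (by omega))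
  -- the induced discrete simplification
  have hSSpath : ∀ k, 1 ≤ k → k ≤ r → IsPath p (e k) v0 v1 (S (xs k)) := by
    intro k h1 h2
    have hbase := hS.1 (xs k) (hxs0 k h1 h2) (hxsM k h1 h2)
    refine ⟨hbase.1, hbase.2.1, hbase.2.2.1, fun ed hed => ?_⟩
    have hor : ed.1 < ed.2 := chain'_edges hbase.1 ed hed
    have hb1 : err p ed.1 ed.2 ≤ xs k := hbase.2.2.2 ed hed
    have hb2 : err p ed.1 ed.2 < εM := lt_of_le_of_lt hb1 (hxsM k h1 h2)
    have hmem : err p ed.1 ed.2 ∈ {x : ℝ | ∃ k, 1 ≤ k ∧ k ≤ r ∧ e k = x} := by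
      rw [← heset]; exact ⟨⟨ed.1, ed.2, hor, rfl⟩, hb2⟩
    obtain ⟨j, hj1, hjr, hje⟩ := hmem
    rw [← hje]
    refine emono j hj1 k ?_ (by omega)
    by_contra hjk
    push_neg at hjk
    have h3 : e (k+1) ≤ e j := emono (k+1) (by omega) j hjk (by omega)
    have h4 : e j ≤ xs k := hje ▸ hb1
    have h5 := (hxs k h1 h2).1.2
    linarith
  have hSSD : (∑ k ∈ Finset.Icc 1 r, (e (k+1) - e k) * ((S (xs k)).length : ℝ)) ∈ D := by
    refine ⟨fun k => S (xs k), ⟨hSSpath, ?_⟩, rfl⟩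
    intro k h1 h2 v hv
    have hle : xs k ≤ xs (k+1) :=
      le_of_lt (lt_of_lt_of_le (hxs k h1 (by omega)).1.2 (hxs (k+1) (by omega) (by omega)).1.1)
    exact hS.2 (xs k) (xs (k+1)) (hxs0 k h1 (by omega)) hle (hxsM (k+1) (by omega) (by omega)) v hv
  calc sInf D ≤ ∑ k ∈ Finset.Icc 1 r, (e (k+1) - e k) * ((S (xs k)).length : ℝ) :=
        csInf_le hDfin.bddBelow hSSD
    _ ≤ ∑ k ∈ Finset.Icc 1 r, ∫ x in (e k)..(e (k+1)),
          (if x < εM then ((S x).length : ℝ) else 0) := by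
        refine Finset.sum_le_sum (fun k hk => ?_)
        simp only [Finset.mem_Icc] at hk
        have hle : e k ≤ e (k+1) := (hemono k hk.1 hk.2).le
        refine piece_ge hle (hpieceInt hS k (by simp [Finset.mem_Ico]; omega)) (fun x hx => ?_)
        have hxM : x < εM := lt_of_lt_of_le hx.2 (heub (k+1) (by omega) (by omega))
        rw [if_pos hxM, Nat.cast_le]
        exact (hxs k hk.1 hk.2).2 x hx
    _ = ∫ x in (0:ℝ)..εM, (if x < εM then ((S x).length : ℝ) else 0) :=
        hsplit _ (hpieceInt hS)
    _ = ∫ x in (0:ℝ)..εM, ((S x).length : ℝ) := (hcongr S).symm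
end
end
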